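/- Let m and b be positive integers. Then ∑_{k=1}^{m} ψ₀(k)·ψ₀(k+b)/k = -(1/2)·∑_{k=1}^{m} ( ψ₁(k)/(k+b) + ψ₀²(k)/(k+b) ) - (1/b)·∑_{k=1}^{m} ψ₀(k+b)/k + (1/b²)·(ψ₀(b+m+1) - ψ₀(b+1) - ψ₀(m+1) + ψ₀(1)) + (1/(2b))·( 2ψ₀(m+1)·ψ₀(b+m+1) - 2ψ₀(1)·ψ₀(b+1) - ψ₀²(m+1) - ψ₁(m+1) + ψ₀²(1) + ψ₁(1) ) + (1/2)·( (ψ₀²(m+1) + ψ₁(m+1))·ψ₀(b+m+1) - (ψ₀²(1) + ψ₁(1))·ψ₀(b+1) ). -/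
import Mathlib


open Finset

/-- Digamma function at a positive integer argument: `ψ₀ l = -γ + ∑_{i=1}^{l-1} 1/i`. -/
noncomputable def ψ₀ (l : ℕ) : ℝ :=
  -Real.eulerMascheroniConstant + ∑ i ∈ Finset.range (l - 1), (1 : ℝ) / (i + 1)

/-- Trigamma function at a positive integer argument: `ψ₁ l = π²/6 - ∑_{i=1}^{l-1} 1/i²`. -/
noncomputable def ψ₁ (l : ℕ) : ℝ :=
  Real.pi ^ 2 / 6 - ∑ i ∈ Finset.range (l - 1), (1 : ℝ) / (i + 1) ^ 2

/-- Tetragamma function at a positive integer argument: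
`ψ₂ l = -2ζ(3) + 2∑_{i=1}^{l-1} 1/i³`, where `ζ(3) = ∑_{i=1}^∞ 1/i³`. -/
noncomputable def ψ₂ (l : ℕ) : ℝ :=
  -2 * (∑' i : ℕ, (1 : ℝ) / (i + 1) ^ 3) +
    2 * ∑ i ∈ Finset.range (l - 1), (1 : ℝ) / (i + 1) ^ 3

lemma psi0_succ (l : ℕ) (hl : 1 ≤ l) : ψ₀ (l + 1) = ψ₀ l + 1 / (l : ℝ) := by
  obtain ⟨n, rfl⟩ : ∃ n, l = n + 1 := ⟨l - 1, by omega⟩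
  simp [ψ₀, Nat.add_sub_cancel, Finset.sum_range_succ]
  ring

lemma psi1_succ (l : ℕ) (hl : 1 ≤ l) : ψ₁ (l + 1) = ψ₁ l - 1 / (l : ℝ) ^ 2 := by
  obtain ⟨n, rfl⟩ : ∃ n, l = n + 1 := ⟨l - 1, by omega⟩
  simp [ψ₁, Nat.add_sub_cancel, Finset.sum_range_succ]
  ring

lemma key14 (b : ℕ) (hb : 0 < b) (m : ℕ) :
    ∑ k ∈ Finset.Icc 1 m, ψ₀ k * ψ₀ (k + b) / (k : ℝ) =
      -(1 / 2) * ∑ k ∈ Finset.Icc 1 m,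
          (ψ₁ k / ((k : ℝ) + b) + ψ₀ k ^ 2 / ((k : ℝ) + b)) -
        (1 / (b : ℝ)) * ∑ k ∈ Finset.Icc 1 m, ψ₀ (k + b) / (k : ℝ) +
        (1 / (b : ℝ) ^ 2) *
          (ψ₀ (b + m + 1) - ψ₀ (b + 1) - ψ₀ (m + 1) + ψ₀ 1) +
        (1 / (2 * (b : ℝ))) * (2 * ψ₀ (m + 1) * ψ₀ (b + m + 1) -
          2 * ψ₀ 1 * ψ₀ (b + 1) - ψ₀ (m + 1) ^ 2 - ψ₁ (m + 1) + ψ₀ 1 ^ 2 + ψ₁ 1) +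
        (1 / 2) * ((ψ₀ (m + 1) ^ 2 + ψ₁ (m + 1)) * ψ₀ (b + m + 1) -
          (ψ₀ 1 ^ 2 + ψ₁ 1) * ψ₀ (b + 1)) := by
  induction m with
  | zero =>
    rw [show Finset.Icc 1 0 = ∅ from rfl]
    simp only [Finset.sum_empty, Nat.add_zero, Nat.zero_add]
    ring
  | succ n ih =>
    rw [Finset.sum_Icc_succ_top (by omega : 1 ≤ n + 1),
        Finset.sum_Icc_succ_top (by omega : 1 ≤ n + 1),
        Finset.sum_Icc_succ_top (by omega : 1 ≤ n + 1), ih]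
    have e1 : n + 1 + b = b + n + 1 := by omega
    have e2 : b + (n + 1) + 1 = b + n + 1 + 1 := by omega
    rw [e1, e2]
    rw [psi0_succ (b + n + 1) (by omega), psi0_succ (n + 1) (by omega),
        psi1_succ (n + 1) (by omega)]
    have hb' : (b : ℝ) ≠ 0 := by positivity
    have hn' : (n : ℝ) + 1 ≠ 0 := by positivity
    have hbn : (b : ℝ) + n + 1 ≠ 0 := by positivity
    push_cast
    field_simp
    ring

theorem stmt14 (m b : ℕ) (hm : 0 < m) (hb : 0 < b) :
    ∑ k ∈ Finset.Icc 1 m, ψ₀ k * ψ₀ (k + b) / (k : ℝ) =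
      -(1 / 2) * ∑ k ∈ Finset.Icc 1 m,
          (ψ₁ k / ((k : ℝ) + b) + ψ₀ k ^ 2 / ((k : ℝ) + b)) -
        (1 / (b : ℝ)) * ∑ k ∈ Finset.Icc 1 m, ψ₀ (k + b) / (k : ℝ) +
        (1 / (b : ℝ) ^ 2) *
          (ψ₀ (b + m + 1) - ψ₀ (b + 1) - ψ₀ (m + 1) + ψ₀ 1) +
        (1 / (2 * (b : ℝ))) * (2 * ψ₀ (m + 1) * ψ₀ (b + m + 1) -
          2 * ψ₀ 1 * ψ₀ (b + 1) - ψ₀ (m + 1) ^ 2 - ψ₁ (m + 1) + ψ₀ 1 ^ 2 + ψ₁ 1) +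
        (1 / 2) * ((ψ₀ (m + 1) ^ 2 + ψ₁ (m + 1)) * ψ₀ (b + m + 1) -
          (ψ₀ 1 ^ 2 + ψ₁ 1) * ψ₀ (b + 1)) := by
  exact key14 b hb m
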